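/- Let F_q be a finite field of odd cardinality q and let λ ∈ F_q with λ ∉ {0, 1, -3}. Then the number of points [x : y : z] in the projective plane ℙ²(F_q) (nonzero triples (x,y,z) ∈ F_q³ up to scaling by F_q*) satisfying x⁴ + y⁴ + z⁴ = (λ+1)(x²y² + y²z² + z²x²) equals 3·#E_λ^{(λ+3)}(F_q) − 2q − 2, where #E_λ^{(λ+3)}(F_q) = 1 + #{(x,y) ∈ F_q² : (λ+3)y² = x(x−1)(x−λ)}. -/

import Mathlib

set_option linter.unusedSectionVars false
set_option linter.unusedVariables false

open Finset

section
variable {F : Type*} [Field F] [Fintype F] [DecidableEq F]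

lemma card_sq_eq (hF : ringChar F ≠ 2) (a : F) :
    (((univ : Finset F).filter fun x : F => x ^ 2 = a).card : ℤ) = quadraticChar F a + 1 := by
  have := quadraticChar_card_sqrts hF a
  rwa [Set.toFinset_setOf] at this

lemma sum_comp_count {α : Type*} (s : Finset α) (φ : α → F) (g : F → ℤ) :
    ∑ x ∈ s, g (φ x) = ∑ t : F, ((s.filter fun x => φ x = t).card : ℤ) * g t := by
  rw [← Finset.sum_fiberwise s φ (fun x => g (φ x))]
  refine Finset.sum_congr rfl fun t _ => ?_
  rw [Finset.sum_congr rfl (fun x hx => by rw [(Finset.mem_filter.mp hx).2]),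
    Finset.sum_const, nsmul_eq_mul]

lemma sum_sq_expand (hF : ringChar F ≠ 2) (f : F → ℤ) :
    ∑ x : F, f (x ^ 2) = ∑ u : F, (quadraticChar F u + 1) * f u := by
  rw [sum_comp_count univ (fun x : F => x ^ 2) f]
  exact Finset.sum_congr rfl fun u _ => by rw [card_sq_eq hF]

lemma sum_shift (f : F → ℤ) (c : F) : ∑ x : F, f (x + c) = ∑ x : F, f x :=
  Fintype.sum_equiv (Equiv.addRight c) _ _ fun x => rfl

lemma sum_scale (f : F → ℤ) {c : F} (hc : c ≠ 0) : ∑ x : F, f (c * x) = ∑ x : F, f x :=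
  Fintype.sum_equiv (Equiv.mulLeft₀ c hc) _ _ fun x => rfl

lemma chi_sum_zero (hF : ringChar F ≠ 2) : ∑ a : F, (quadraticChar F a : ℤ) = 0 :=
  quadraticChar_sum_zero hF

end

section
variable {F : Type*} [Field F] [Fintype F] [DecidableEq F]

lemma sum_chi_shift (hF : ringChar F ≠ 2) (c : F) :
    ∑ u : F, (quadraticChar F (u + c) : ℤ) = 0 := by
  rw [sum_shift (fun u => (quadraticChar F u : ℤ)) c]
  exact chi_sum_zero hF

lemma sum_chi_u_mul_sub (hF : ringChar F ≠ 2) {e : F} (he : e ≠ 0) :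
    ∑ u : F, (quadraticChar F (u * (u - e)) : ℤ) = -1 := by
  have h0 : ∑ u ∈ (univ : Finset F).erase 0, (quadraticChar F (u * (u - e)) : ℤ)
      = ∑ u : F, (quadraticChar F (u * (u - e)) : ℤ) :=
    Finset.sum_erase _ (by simp)
  rw [← h0]
  have step : ∀ u ∈ (univ : Finset F).erase 0,
      (quadraticChar F (u * (u - e)) : ℤ) = quadraticChar F (1 - e * u⁻¹) := by
    intro u hu
    have hu0 : u ≠ 0 := Finset.ne_of_mem_erase hu
    have : u * (u - e) = u ^ 2 * (1 - e * u⁻¹) := by field_simp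
    rw [this, map_mul, map_pow]
    have := quadraticChar_sq_one hu0
    push_cast
    rw [this]; ring
  rw [Finset.sum_congr rfl step]
  have bij : ∑ u ∈ (univ : Finset F).erase 0, (quadraticChar F (1 - e * u⁻¹) : ℤ)
      = ∑ u ∈ (univ : Finset F).erase 0, (quadraticChar F (1 - u) : ℤ) := by
    refine Finset.sum_nbij' (fun u => e * u⁻¹) (fun u => e * u⁻¹) ?_ ?_ ?_ ?_ ?_
    · intro a ha
      simp only [Finset.mem_erase, Finset.mem_univ, and_true] at ha ⊢
      exact mul_ne_zero he (inv_ne_zero ha)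
    · intro a ha
      simp only [Finset.mem_erase, Finset.mem_univ, and_true] at ha ⊢
      exact mul_ne_zero he (inv_ne_zero ha)
    · intro a ha
      simp only [Finset.mem_erase, Finset.mem_univ, and_true] at ha
      field_simp
    · intro a ha
      simp only [Finset.mem_erase, Finset.mem_univ, and_true] at ha
      field_simp
    · intro a _
      rfl
  rw [bij]
  have h1 : ∑ u : F, (quadraticChar F (1 - u) : ℤ) = 0 :=
    (Fintype.sum_equiv (Equiv.subLeft (1 : F)) (fun u => (quadraticChar F (1 - u) : ℤ))
      (fun u => (quadraticChar F u : ℤ)) (fun x => rfl)).trans (chi_sum_zero hF)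
  have h2 : (quadraticChar F (1 - (0 : F)) : ℤ) + ∑ u ∈ (univ : Finset F).erase 0,
      (quadraticChar F (1 - u) : ℤ) = ∑ u : F, (quadraticChar F (1 - u) : ℤ) :=
    Finset.add_sum_erase _ (fun u : F => (quadraticChar F (1 - u) : ℤ)) (Finset.mem_univ (0 : F))
  rw [h1] at h2
  simp only [sub_zero, map_one] at h2
  push_cast at h2 ⊢
  linarith

lemma sum_chi_sq_sub (hF : ringChar F ≠ 2) {e : F} (he : e ≠ 0) :
    ∑ x : F, (quadraticChar F (x ^ 2 - e) : ℤ) = -1 := by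
  rw [sum_sq_expand hF (fun u => (quadraticChar F (u - e) : ℤ))]
  have : ∀ u : F, ((quadraticChar F u : ℤ) + 1) * (quadraticChar F (u - e) : ℤ)
      = (quadraticChar F (u * (u - e)) : ℤ) + (quadraticChar F (u - e) : ℤ) := by
    intro u; rw [map_mul]; push_cast; ring
  rw [Finset.sum_congr rfl fun u _ => this u, Finset.sum_add_distrib,
    sum_chi_u_mul_sub hF he]
  have : ∑ u : F, (quadraticChar F (u - e) : ℤ) = 0 := by
    have := sum_chi_shift hF (-e); simpa [sub_eq_add_neg] using this
  rw [this]; ring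

lemma sum_chi_sq' (hF : ringChar F ≠ 2) :
    ∑ x : F, (quadraticChar F (x ^ 2) : ℤ) = (Fintype.card F : ℤ) - 1 := by
  rw [← Finset.add_sum_erase (univ : Finset F) (fun x : F => (quadraticChar F (x ^ 2) : ℤ))
    (Finset.mem_univ (0 : F))]
  have : ∀ x ∈ (univ : Finset F).erase 0, (quadraticChar F (x ^ 2) : ℤ) = 1 := by
    intro x hx
    have hx0 : x ≠ 0 := Finset.ne_of_mem_erase hx
    rw [map_pow]
    have := quadraticChar_sq_one hx0
    push_cast; rw [this]
  rw [Finset.sum_congr rfl this, Finset.sum_const, Finset.card_erase_of_mem (Finset.mem_univ 0),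
    Finset.card_univ]
  have h1 : (1:ℕ) ≤ Fintype.card F := Fintype.card_pos
  have : (quadraticChar F ((0:F) ^ 2) : ℤ) = 0 := by
    norm_num
  rw [this]
  simp only [nsmul_eq_mul, mul_one]
  omega

end

section
variable {F : Type*} [Field F] [Fintype F] [DecidableEq F]

lemma sum_chi_quadratic (hF : ringChar F ≠ 2) {a : F} (ha : a ≠ 0) (b c : F) :
    ∑ x : F, (quadraticChar F (a * x ^ 2 + b * x + c) : ℤ) =
      if b ^ 2 - 4 * (a * c) = 0 then (quadraticChar F a : ℤ) * ((Fintype.card F : ℤ) - 1)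
      else -(quadraticChar F a : ℤ) := by
  have h2 : (2 : F) ≠ 0 := Ring.two_ne_zero hF
  have h4a : (4 : F) * a ≠ 0 := by
    refine mul_ne_zero ?_ ha
    intro h
    apply h2
    have h' : (2 : F) * 2 = 0 := by rw [← h]; norm_num
    rcases mul_eq_zero.mp h' with h'' | h'' <;> exact h''
  set d : F := b ^ 2 - 4 * (a * c) with hd_def
  have hchi4a : (quadraticChar F (4 * a) : ℤ) = quadraticChar F a := by
    have : (4 : F) * a = 2 ^ 2 * a := by norm_num
    rw [this, map_mul, map_pow]
    have := quadraticChar_sq_one h2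
    push_cast
    rw [this]
    ring
  have hsq : (quadraticChar F (4 * a) : ℤ) * (quadraticChar F (4 * a) : ℤ) = 1 := by
    have := quadraticChar_sq_one h4a
    push_cast
    rw [← this]
    ring
  have key : ∀ x : F, (quadraticChar F (a * x ^ 2 + b * x + c) : ℤ)
      = (quadraticChar F (4 * a) : ℤ) * quadraticChar F ((2 * a * x + b) ^ 2 - d) := by
    intro x
    have hmul : (4 * a) * (a * x ^ 2 + b * x + c) = (2 * a * x + b) ^ 2 - d := by
      rw [hd_def]; ring
    calc (quadraticChar F (a * x ^ 2 + b * x + c) : ℤ)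
        = ((quadraticChar F (4 * a) : ℤ) * quadraticChar F (4 * a)) *
            quadraticChar F (a * x ^ 2 + b * x + c) := by rw [hsq]; ring
      _ = (quadraticChar F (4 * a) : ℤ) *
            quadraticChar F ((4 * a) * (a * x ^ 2 + b * x + c)) := by
          simp only [map_mul]; push_cast; ring
      _ = (quadraticChar F (4 * a) : ℤ) * quadraticChar F ((2 * a * x + b) ^ 2 - d) := by
          rw [hmul]
  rw [Finset.sum_congr rfl fun x _ => key x, ← Finset.mul_sum]
  have reindex : ∑ x : F, (quadraticChar F ((2 * a * x + b) ^ 2 - d) : ℤ)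
      = ∑ y : F, (quadraticChar F (y ^ 2 - d) : ℤ) := by
    have h2a : (2 : F) * a ≠ 0 := mul_ne_zero h2 ha
    rw [show (fun x : F => (quadraticChar F ((2 * a * x + b) ^ 2 - d) : ℤ))
        = (fun x : F => (fun t : F => (quadraticChar F ((t + b) ^ 2 - d) : ℤ)) ((2 * a) * x))
        from rfl]
    rw [sum_scale (fun t : F => (quadraticChar F ((t + b) ^ 2 - d) : ℤ)) h2a]
    exact sum_shift (fun t : F => (quadraticChar F (t ^ 2 - d) : ℤ)) b
  rw [reindex]
  by_cases hd : d = 0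
  · rw [if_pos hd, hd]
    simp only [sub_zero]
    rw [sum_chi_sq' hF, hchi4a]
  · rw [if_neg hd, sum_chi_sq_sub hF hd, hchi4a]
    ring

lemma quad_root_count (hF : ringChar F ≠ 2) (b c : F) :
    (((univ : Finset F).filter fun x : F => x ^ 2 + b * x + c = 0).card : ℤ)
      = quadraticChar F (b ^ 2 - 4 * c) + 1 := by
  have h2 : (2 : F) ≠ 0 := Ring.two_ne_zero hF
  have h4 : (4 : F) ≠ 0 := by
    intro hh
    apply h2
    have h' : (2 : F) * 2 = 0 := by rw [← hh]; norm_num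
    rcases mul_eq_zero.mp h' with h'' | h'' <;> exact h''
  have hiff : ∀ x : F, x ^ 2 + b * x + c = 0 ↔ (2 * x + b) ^ 2 = b ^ 2 - 4 * c := by
    intro x
    constructor
    · intro h
      have : (2 * x + b) ^ 2 = 4 * (x ^ 2 + b * x + c) + (b ^ 2 - 4 * c) := by ring
      rw [this, h]; ring
    · intro h
      have h0 : 4 * (x ^ 2 + b * x + c) = 0 := by
        rw [show (4 : F) * (x ^ 2 + b * x + c) = (2 * x + b) ^ 2 - (b ^ 2 - 4 * c) from by ring,
          h, sub_self]
      exact (mul_eq_zero.mp h0).resolve_left h4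
  have hcard : ((univ : Finset F).filter fun x : F => x ^ 2 + b * x + c = 0).card
      = ((univ : Finset F).filter fun y : F => y ^ 2 = b ^ 2 - 4 * c).card := by
    refine Finset.card_nbij' (fun x => 2 * x + b) (fun y => 2⁻¹ * (y - b)) ?_ ?_ ?_ ?_
    · intro x hx
      simp only [Finset.coe_filter, Finset.mem_coe, Finset.mem_filter, Finset.mem_univ, true_and, Set.mem_setOf_eq] at hx ⊢
      exact (hiff x).mp hx
    · intro y hy
      simp only [Finset.coe_filter, Finset.mem_coe, Finset.mem_filter, Finset.mem_univ, true_and, Set.mem_setOf_eq] at hy ⊢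
      rw [hiff]
      have : 2 * (2⁻¹ * (y - b)) + b = y := by field_simp; ring
      rw [this]
      exact hy
    · intro x _
      simp only
      field_simp
      ring
    · intro y _
      simp only
      field_simp
      ring
  rw [hcard, card_sq_eq hF]

end

section
variable {F : Type*} [Field F] [Fintype F] [DecidableEq F]

lemma isogeny_sum (hF : ringChar F ≠ 2) {a b : F} (hb : b ≠ 0) :
    ∑ x : F, (quadraticChar F (x * (x ^ 2 + a * x + b)) : ℤ)
      = ∑ x : F, (quadraticChar F (x * (x ^ 2 - 2 * a * x + (a ^ 2 - 4 * b))) : ℤ) := by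
  -- step 1: restrict to nonzero x and divide by x²
  have e0 : ∑ x : F, (quadraticChar F (x * (x ^ 2 + a * x + b)) : ℤ)
      = ∑ x ∈ (univ : Finset F).erase 0, (quadraticChar F ((x + b * x⁻¹) + a) : ℤ) := by
    rw [← Finset.sum_erase (univ : Finset F)
      (f := fun x : F => (quadraticChar F (x * (x ^ 2 + a * x + b)) : ℤ)) (a := (0 : F))
      (by norm_num)]
    refine Finset.sum_congr rfl fun x hx => ?_
    have hx0 : x ≠ 0 := Finset.ne_of_mem_erase hx
    have hid : x * (x ^ 2 + a * x + b) = x ^ 2 * ((x + b * x⁻¹) + a) := by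
      field_simp; ring
    rw [hid, map_mul, map_pow]
    have := quadraticChar_sq_one hx0
    push_cast
    rw [this]; ring
  -- step 2: group by t = x + b/x
  have e1 : ∑ x ∈ (univ : Finset F).erase 0, (quadraticChar F ((x + b * x⁻¹) + a) : ℤ)
      = ∑ t : F, ((((univ : Finset F).erase 0).filter fun x => x + b * x⁻¹ = t).card : ℤ)
          * quadraticChar F (t + a) :=
    sum_comp_count ((univ : Finset F).erase 0) (fun x => x + b * x⁻¹)
      (fun t => (quadraticChar F (t + a) : ℤ))
  -- step 3: fiber count
  have e2 : ∀ t : F, ((((univ : Finset F).erase 0).filter fun x => x + b * x⁻¹ = t).card : ℤ)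
      = quadraticChar F (t ^ 2 - 4 * b) + 1 := by
    intro t
    have hset : (((univ : Finset F).erase 0).filter fun x => x + b * x⁻¹ = t)
        = (univ : Finset F).filter fun x => x ^ 2 + (-t) * x + b = 0 := by
      ext x
      simp only [Finset.mem_filter, Finset.mem_erase, Finset.mem_univ, true_and, and_true]
      constructor
      · rintro ⟨hx0, hx⟩
        have := congrArg (· * x) hx
        field_simp at this
        rw [show x ^ 2 + (-t) * x + b = (x ^ 2 + b) - x * t from by ring, this]
        ring
      · intro h
        have hx0 : x ≠ 0 := by
          intro h0
          rw [h0] at h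
          simp at h
          exact hb h
        refine ⟨hx0, ?_⟩
        have : x * x + b = t * x := by
          rw [show x * x + b = (x ^ 2 + (-t) * x + b) + t * x from by ring, h]; ring
        field_simp
        rw [show x * x = x ^ 2 from by ring] at this
        linear_combination this
      
    rw [hset, quad_root_count hF]
    ring_nf
  -- assemble
  rw [e0, e1, Finset.sum_congr rfl fun t _ => by rw [e2 t]]
  have split : ∑ t : F, ((quadraticChar F (t ^ 2 - 4 * b) : ℤ) + 1) * quadraticChar F (t + a)
      = ∑ t : F, (quadraticChar F ((t ^ 2 - 4 * b) * (t + a)) : ℤ)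
        + ∑ t : F, (quadraticChar F (t + a) : ℤ) := by
    rw [← Finset.sum_add_distrib]
    refine Finset.sum_congr rfl fun t _ => ?_
    rw [map_mul]; push_cast; ring
  rw [split, sum_chi_shift hF a, add_zero]
  -- step 5: shift t ↦ t - a
  have e3 : ∑ t : F, (quadraticChar F ((t ^ 2 - 4 * b) * (t + a)) : ℤ)
      = ∑ t : F, (quadraticChar F (((t + -a) ^ 2 - 4 * b) * ((t + -a) + a)) : ℤ) :=
    (sum_shift (fun t : F => (quadraticChar F ((t ^ 2 - 4 * b) * (t + a)) : ℤ)) (-a)).symm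
  rw [e3]
  refine Finset.sum_congr rfl fun t _ => ?_
  rw [show ((t + -a) ^ 2 - 4 * b) * ((t + -a) + a) = t * (t ^ 2 - 2 * a * t + (a ^ 2 - 4 * b))
    from by ring]

end

section
variable {F : Type*} [Field F] [Fintype F] [DecidableEq F]

lemma chi_sq_mul (hF : ringChar F ≠ 2) {s : F} (hs : s ≠ 0) (m : F) :
    (quadraticChar F (s ^ 2 * m) : ℤ) = quadraticChar F m := by
  rw [map_mul, map_pow]
  have := quadraticChar_sq_one hs
  push_cast
  rw [this]; ring

lemma legendre_transform (hF : ringChar F ≠ 2) (lam : F) (h1 : lam ≠ 1) :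
    ∑ v : F, (quadraticChar F (v * ((lam - 1) * v ^ 2 + 2 * (lam + 1) * v + (lam - 1))) : ℤ)
      = ∑ x : F, (quadraticChar F (x * (x - 1) * (x - lam)) : ℤ) := by
  have h2 : (2 : F) ≠ 0 := Ring.two_ne_zero hF
  have hl1 : lam - 1 ≠ 0 := sub_ne_zero.mpr h1
  have he : (lam - 1)⁻¹ ≠ 0 := inv_ne_zero hl1
  -- A: scale v = (lam-1)⁻¹ * x
  have stepA : ∑ v : F, (quadraticChar F (v * ((lam - 1) * v ^ 2 + 2 * (lam + 1) * v
        + (lam - 1))) : ℤ)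
      = ∑ x : F, (quadraticChar F (x * (x ^ 2 + (2 * (lam + 1)) * x + (lam - 1) ^ 2)) : ℤ) := by
    rw [← sum_scale (fun v : F => (quadraticChar F (v * ((lam - 1) * v ^ 2 + 2 * (lam + 1) * v
        + (lam - 1))) : ℤ)) he]
    refine Finset.sum_congr rfl fun x _ => ?_
    have hid : ((lam - 1)⁻¹ * x) * ((lam - 1) * ((lam - 1)⁻¹ * x) ^ 2
          + 2 * (lam + 1) * ((lam - 1)⁻¹ * x) + (lam - 1))
        = ((lam - 1)⁻¹) ^ 2 * (x * (x ^ 2 + (2 * (lam + 1)) * x + (lam - 1) ^ 2)) := by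
      field_simp
    rw [hid, chi_sq_mul hF he]
  -- B: 2-isogeny
  have stepB := isogeny_sum hF (a := 2 * (lam + 1)) (b := (lam - 1) ^ 2)
    (pow_ne_zero 2 hl1)
  -- C: scale x = 4 * y
  have h4 : (4 : F) ≠ 0 := by
    intro hh
    apply h2
    have h' : (2 : F) * 2 = 0 := by rw [← hh]; norm_num
    rcases mul_eq_zero.mp h' with h'' | h'' <;> exact h''
  have h8 : (8 : F) ≠ 0 := by
    intro hh
    have h' : (2 : F) * 4 = 0 := by rw [← hh]; norm_num
    rcases mul_eq_zero.mp h' with h'' | h'' <;> [exact h2 h''; exact h4 h'']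
  have stepC : ∑ x : F, (quadraticChar F (x * (x ^ 2 - 2 * (2 * (lam + 1)) * x
        + ((2 * (lam + 1)) ^ 2 - 4 * (lam - 1) ^ 2))) : ℤ)
      = ∑ y : F, (quadraticChar F (y * (y - 1) * (y - lam)) : ℤ) := by
    rw [← sum_scale (fun x : F => (quadraticChar F (x * (x ^ 2 - 2 * (2 * (lam + 1)) * x
        + ((2 * (lam + 1)) ^ 2 - 4 * (lam - 1) ^ 2))) : ℤ)) h4]
    refine Finset.sum_congr rfl fun y _ => ?_
    have hid : (4 * y) * ((4 * y) ^ 2 - 2 * (2 * (lam + 1)) * (4 * y)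
          + ((2 * (lam + 1)) ^ 2 - 4 * (lam - 1) ^ 2))
        = (8 : F) ^ 2 * (y * (y - 1) * (y - lam)) := by ring
    rw [hid, chi_sq_mul hF h8]
  rw [stepA, stepB, stepC]

end

section
variable {F : Type*} [Field F] [Fintype F] [DecidableEq F]

/-- The ternary quadric associated to the quartic. -/
def Qp (lam u v w : F) : F := u ^ 2 + v ^ 2 + w ^ 2 - (lam + 1) * (u * v + v * w + w * u)

/-- Discriminant of `Qp` as a quadratic in `w`. -/
def Dd (lam u v : F) : F := (lam + 3) * ((lam - 1) * (u ^ 2 + v ^ 2) + 2 * (lam + 1) * (u * v))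

lemma root_count_w (hF : ringChar F ≠ 2) (lam u v : F) :
    (((univ : Finset F).filter fun w : F => Qp lam u v w = 0).card : ℤ)
      = 1 + quadraticChar F (Dd lam u v) := by
  have hset : ((univ : Finset F).filter fun w : F => Qp lam u v w = 0)
      = (univ : Finset F).filter fun w : F =>
          w ^ 2 + (-((lam + 1) * (u + v))) * w + (u ^ 2 + v ^ 2 - (lam + 1) * (u * v)) = 0 := by
    refine Finset.filter_congr fun w _ => ?_
    rw [show Qp lam u v w = w ^ 2 + (-((lam + 1) * (u + v))) * w
      + (u ^ 2 + v ^ 2 - (lam + 1) * (u * v)) from by unfold Qp; ring]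
  rw [hset, quad_root_count hF]
  rw [show (-((lam + 1) * (u + v))) ^ 2 - 4 * (u ^ 2 + v ^ 2 - (lam + 1) * (u * v))
    = Dd lam u v from by unfold Dd; ring]
  ring

lemma sum_ite_w (lam u v : F) (k : ℤ) :
    ∑ w : F, (if Qp lam u v w = 0 then k else 0)
      = (((univ : Finset F).filter fun w : F => Qp lam u v w = 0).card : ℤ) * k := by
  rw [← Finset.sum_filter, Finset.sum_const, nsmul_eq_mul]

lemma triple_scale {c : F} (hc0 : c ≠ 0) (f : F → F → F → ℤ) :
    ∑ u : F, ∑ v : F, ∑ w : F, f u v w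
      = ∑ u : F, ∑ v : F, ∑ w : F, f (c * u) (c * v) (c * w) := by
  rw [← sum_scale (fun u => ∑ v : F, ∑ w : F, f u v w) hc0]
  refine Finset.sum_congr rfl fun u _ => ?_
  rw [← sum_scale (fun v => ∑ w : F, f (c * u) v w) hc0]
  refine Finset.sum_congr rfl fun v _ => ?_
  rw [← sum_scale (fun w => f (c * u) (c * v) w) hc0]

lemma vanish_odd (hF : ringChar F ≠ 2) {c : F} (hc0 : c ≠ 0)
    (hc : (quadraticChar F c : ℤ) = -1) (lam : F) (g : F → F → F → F)
    (hgv : ∀ u v w : F, (quadraticChar F (g (c * u) (c * v) (c * w)) : ℤ)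
      = -(quadraticChar F (g u v w) : ℤ)) :
    ∑ u : F, ∑ v : F, ∑ w : F,
      (if Qp lam u v w = 0 then (quadraticChar F (g u v w) : ℤ) else 0) = 0 := by
  set S := ∑ u : F, ∑ v : F, ∑ w : F,
      (if Qp lam u v w = 0 then (quadraticChar F (g u v w) : ℤ) else 0) with hS
  have key : S = -S := by
    nth_rewrite 1 [hS]
    rw [triple_scale hc0]
    have step : ∀ u v w : F,
        (if Qp lam (c * u) (c * v) (c * w) = 0
          then (quadraticChar F (g (c * u) (c * v) (c * w)) : ℤ) else 0)
        = -(if Qp lam u v w = 0 then (quadraticChar F (g u v w) : ℤ) else 0) := by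
      intro u v w
      have hQ : Qp lam (c * u) (c * v) (c * w) = c ^ 2 * Qp lam u v w := by
        unfold Qp; ring
      have hiff : (Qp lam (c * u) (c * v) (c * w) = 0) ↔ (Qp lam u v w = 0) := by
        rw [hQ]
        constructor
        · intro h
          rcases mul_eq_zero.mp h with h' | h'
          · exact absurd h' (pow_ne_zero 2 hc0)
          · exact h'
        · intro h; rw [h, mul_zero]
      by_cases h : Qp lam u v w = 0
      · rw [if_pos (hiff.mpr h), if_pos h, hgv]
      · rw [if_neg (fun hh => h (hiff.mp hh)), if_neg h, neg_zero]
    calc ∑ u : F, ∑ v : F, ∑ w : F,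
        (if Qp lam (c * u) (c * v) (c * w) = 0
          then (quadraticChar F (g (c * u) (c * v) (c * w)) : ℤ) else 0)
        = ∑ u : F, ∑ v : F, ∑ w : F,
            -(if Qp lam u v w = 0 then (quadraticChar F (g u v w) : ℤ) else 0) := by
          exact Finset.sum_congr rfl fun u _ => Finset.sum_congr rfl fun v _ =>
            Finset.sum_congr rfl fun w _ => step u v w
      _ = -S := by rw [hS]; simp [Finset.sum_neg_distrib]
  linarith

end

section
variable {F : Type*} [Field F] [Fintype F] [DecidableEq F]

lemma sixteen_ne_zero (hF : ringChar F ≠ 2) : (16 : F) ≠ 0 := by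
  have h2 : (2 : F) ≠ 0 := Ring.two_ne_zero hF
  have : (16 : F) = 2 ^ 4 := by norm_num
  rw [this]
  exact pow_ne_zero 4 h2

lemma sum_chi_Dd (hF : ringChar F ≠ 2) (lam : F) (h0 : lam ≠ 0) (h1 : lam ≠ 1)
    (h3 : lam + 3 ≠ 0) :
    ∀ u : F, ∑ v : F, (quadraticChar F (Dd lam u v) : ℤ)
      = if u = 0 then (quadraticChar F ((lam + 3) * (lam - 1)) : ℤ) * ((Fintype.card F : ℤ) - 1)
        else -(quadraticChar F ((lam + 3) * (lam - 1)) : ℤ) := by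
  intro u
  have hl1 : lam - 1 ≠ 0 := sub_ne_zero.mpr h1
  have ha : (lam + 3) * (lam - 1) ≠ 0 := mul_ne_zero h3 hl1
  have hshape : ∀ v : F, Dd lam u v = ((lam + 3) * (lam - 1)) * v ^ 2
      + (2 * (lam + 1) * (lam + 3) * u) * v + ((lam + 3) * (lam - 1) * u ^ 2) := by
    intro v; unfold Dd; ring
  rw [Finset.sum_congr rfl fun v _ => by rw [hshape v]]
  rw [sum_chi_quadratic hF ha]
  rw [show (2 * (lam + 1) * (lam + 3) * u) ^ 2
      - 4 * ((lam + 3) * (lam - 1) * ((lam + 3) * (lam - 1) * u ^ 2))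
    = 16 * lam * ((lam + 3) ^ 2 * u ^ 2) from by ring]
  by_cases hu : u = 0
  · rw [if_pos hu, if_pos (by rw [hu]; ring)]
  · rw [if_neg hu, if_neg ?_]
    exact mul_ne_zero (mul_ne_zero (sixteen_ne_zero hF) h0)
      (mul_ne_zero (pow_ne_zero 2 h3) (pow_ne_zero 2 hu))

lemma sum_ite_zero_const (X Y : ℤ) :
    ∑ u : F, (if u = 0 then X else Y) = X + ((Fintype.card F : ℤ) - 1) * Y := by
  have hpt : ∀ u : F, (if u = 0 then X else Y) = Y + (if u = 0 then X - Y else 0) := by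
    intro u
    by_cases h : u = 0
    · rw [if_pos h, if_pos h]; ring
    · rw [if_neg h, if_neg h]; ring
  rw [Finset.sum_congr rfl fun u _ => hpt u, Finset.sum_add_distrib, Finset.sum_const,
    Finset.card_univ, nsmul_eq_mul, Finset.sum_ite_eq' univ (0 : F) (fun _ => X - Y),
    if_pos (Finset.mem_univ (0 : F))]
  ring

lemma sum_A (hF : ringChar F ≠ 2) (lam : F) (h0 : lam ≠ 0) (h1 : lam ≠ 1)
    (h3 : lam + 3 ≠ 0) :
    ∑ u : F, ∑ v : F, ∑ w : F, (if Qp lam u v w = 0 then (1 : ℤ) else 0)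
      = (Fintype.card F : ℤ) ^ 2 := by
  have hin : ∀ u v : F, ∑ w : F, (if Qp lam u v w = 0 then (1 : ℤ) else 0)
      = 1 + quadraticChar F (Dd lam u v) := by
    intro u v
    rw [sum_ite_w, root_count_w hF, mul_one]
  rw [Finset.sum_congr rfl fun u _ => Finset.sum_congr rfl fun v _ => hin u v]
  have split : ∀ u : F, ∑ v : F, ((1 : ℤ) + quadraticChar F (Dd lam u v))
      = (Fintype.card F : ℤ) + ∑ v : F, (quadraticChar F (Dd lam u v) : ℤ) := by
    intro u
    rw [Finset.sum_add_distrib, Finset.sum_const, Finset.card_univ, nsmul_eq_mul, mul_one]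
  rw [Finset.sum_congr rfl fun u _ => split u]
  rw [Finset.sum_add_distrib, Finset.sum_const, Finset.card_univ, nsmul_eq_mul]
  rw [Finset.sum_congr rfl fun u _ => sum_chi_Dd hF lam h0 h1 h3 u]
  rw [sum_ite_zero_const]
  ring

end

section
variable {F : Type*} [Field F] [Fintype F] [DecidableEq F]

lemma sum_B (hF : ringChar F ≠ 2) (lam : F) (h1 : lam ≠ 1) (h3 : lam + 3 ≠ 0) :
    ∑ u : F, ∑ v : F, ∑ w : F,
        (if Qp lam u v w = 0 then (quadraticChar F (u * v) : ℤ) else 0)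
      = ((Fintype.card F : ℤ) - 1) * ((quadraticChar F (lam + 3) : ℤ)
          * ∑ x : F, (quadraticChar F (x * (x - 1) * (x - lam)) : ℤ)) := by
  have hin : ∀ u v : F, ∑ w : F,
      (if Qp lam u v w = 0 then (quadraticChar F (u * v) : ℤ) else 0)
      = (quadraticChar F (u * v) : ℤ) + quadraticChar F ((u * v) * Dd lam u v) := by
    intro u v
    rw [sum_ite_w, root_count_w hF, map_mul (quadraticChar F) (u * v) (Dd lam u v)]
    push_cast
    ring
  rw [Finset.sum_congr rfl fun u _ => Finset.sum_congr rfl fun v _ => hin u v]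
  have split : ∀ u : F, ∑ v : F, ((quadraticChar F (u * v) : ℤ)
        + quadraticChar F ((u * v) * Dd lam u v))
      = ∑ v : F, (quadraticChar F (u * v) : ℤ)
        + ∑ v : F, (quadraticChar F ((u * v) * Dd lam u v) : ℤ) :=
    fun u => Finset.sum_add_distrib
  rw [Finset.sum_congr rfl fun u _ => split u, Finset.sum_add_distrib]
  have hzero : ∑ u : F, ∑ v : F, (quadraticChar F (u * v) : ℤ) = 0 := by
    have : ∀ u : F, ∑ v : F, (quadraticChar F (u * v) : ℤ) = 0 := by
      intro u
      have : ∀ v : F, (quadraticChar F (u * v) : ℤ)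
          = (quadraticChar F u : ℤ) * quadraticChar F v := by
        intro v; exact_mod_cast map_mul (quadraticChar F) u v
      rw [Finset.sum_congr rfl fun v _ => this v, ← Finset.mul_sum, chi_sum_zero hF, mul_zero]
    rw [Finset.sum_congr rfl fun u _ => this u, Finset.sum_const, smul_zero]
  rw [hzero, zero_add]
  -- second piece
  have hmain : ∀ u : F, ∑ v : F, (quadraticChar F ((u * v) * Dd lam u v) : ℤ)
      = if u = 0 then 0
        else ∑ v : F, (quadraticChar F (v * Dd lam 1 v) : ℤ) := by
    intro u
    by_cases hu : u = 0
    · rw [if_pos hu]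
      refine Finset.sum_eq_zero fun v _ => ?_
      rw [hu]
      norm_num
    · rw [if_neg hu]
      rw [← sum_scale (fun v : F => (quadraticChar F ((u * v) * Dd lam u v) : ℤ)) hu]
      refine Finset.sum_congr rfl fun v _ => ?_
      have hid : (u * (u * v)) * Dd lam u (u * v) = (u ^ 2) ^ 2 * (v * Dd lam 1 v) := by
        unfold Dd; ring
      rw [hid, chi_sq_mul hF (pow_ne_zero 2 hu)]
  rw [Finset.sum_congr rfl fun u _ => hmain u, sum_ite_zero_const]
  have hT2 : ∑ v : F, (quadraticChar F (v * Dd lam 1 v) : ℤ)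
      = (quadraticChar F (lam + 3) : ℤ)
          * ∑ x : F, (quadraticChar F (x * (x - 1) * (x - lam)) : ℤ) := by
    have hpt : ∀ v : F, (quadraticChar F (v * Dd lam 1 v) : ℤ)
        = (quadraticChar F (lam + 3) : ℤ)
          * quadraticChar F (v * ((lam - 1) * v ^ 2 + 2 * (lam + 1) * v + (lam - 1))) := by
      intro v
      rw [show v * Dd lam 1 v
        = (lam + 3) * (v * ((lam - 1) * v ^ 2 + 2 * (lam + 1) * v + (lam - 1)))
        from by unfold Dd; ring, map_mul (quadraticChar F) (lam + 3)]
    rw [Finset.sum_congr rfl fun v _ => hpt v, ← Finset.mul_sum,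
      legendre_transform hF lam h1]
  rw [hT2]
  ring

end

section
variable {F : Type*} [Field F] [Fintype F] [DecidableEq F]

lemma cyclic1 (H : F → F → F → ℤ) :
    ∑ a : F, ∑ b : F, ∑ c : F, H c a b = ∑ a : F, ∑ b : F, ∑ c : F, H a b c := by
  calc ∑ a : F, ∑ b : F, ∑ c : F, H c a b
      = ∑ a : F, ∑ c : F, ∑ b : F, H c a b :=
        Finset.sum_congr rfl fun a _ => Finset.sum_comm
    _ = ∑ c : F, ∑ a : F, ∑ b : F, H c a b := Finset.sum_comm

lemma cyclic2 (H : F → F → F → ℤ) :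
    ∑ a : F, ∑ b : F, ∑ c : F, H b c a = ∑ a : F, ∑ b : F, ∑ c : F, H a b c := by
  calc ∑ a : F, ∑ b : F, ∑ c : F, H b c a
      = ∑ b : F, ∑ a : F, ∑ c : F, H b c a := Finset.sum_comm
    _ = ∑ b : F, ∑ c : F, ∑ a : F, H b c a :=
        Finset.sum_congr rfl fun b _ => Finset.sum_comm

lemma Qp_cyc (lam u v w : F) : Qp lam w u v = Qp lam u v w := by unfold Qp; ring

lemma sum_vw_eq (lam : F) :
    ∑ u : F, ∑ v : F, ∑ w : F,
        (if Qp lam u v w = 0 then (quadraticChar F (v * w) : ℤ) else 0)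
      = ∑ u : F, ∑ v : F, ∑ w : F,
        (if Qp lam u v w = 0 then (quadraticChar F (u * v) : ℤ) else 0) := by
  have key : ∀ u v w : F,
      (if Qp lam u v w = 0 then (quadraticChar F (u * v) : ℤ) else 0)
      = (fun a b c => if Qp lam a b c = 0 then (quadraticChar F (b * c) : ℤ) else 0) w u v := by
    intro u v w
    simp only
    rw [show Qp lam w u v = Qp lam u v w from by unfold Qp; ring]
  conv_rhs => rw [Finset.sum_congr rfl fun u _ => Finset.sum_congr rfl fun v _ =>
    Finset.sum_congr rfl fun w _ => key u v w]
  exact (cyclic1 (fun a b c => if Qp lam a b c = 0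
    then (quadraticChar F (b * c) : ℤ) else 0)).symm

lemma sum_wu_eq (lam : F) :
    ∑ u : F, ∑ v : F, ∑ w : F,
        (if Qp lam u v w = 0 then (quadraticChar F (w * u) : ℤ) else 0)
      = ∑ u : F, ∑ v : F, ∑ w : F,
        (if Qp lam u v w = 0 then (quadraticChar F (u * v) : ℤ) else 0) := by
  have key : ∀ u v w : F,
      (if Qp lam u v w = 0 then (quadraticChar F (u * v) : ℤ) else 0)
      = (fun a b c => if Qp lam a b c = 0 then (quadraticChar F (c * a) : ℤ) else 0) v w u := by
    intro u v w
    simp only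
    rw [show Qp lam v w u = Qp lam u v w from by unfold Qp; ring]
  conv_rhs => rw [Finset.sum_congr rfl fun u _ => Finset.sum_congr rfl fun v _ =>
    Finset.sum_congr rfl fun w _ => key u v w]
  exact (cyclic2 (fun a b c => if Qp lam a b c = 0
    then (quadraticChar F (c * a) : ℤ) else 0)).symm

end

section
variable {F : Type*} [Field F] [Fintype F] [DecidableEq F]

lemma quartic_affine (hF : ringChar F ≠ 2) (lam : F) (h0 : lam ≠ 0) (h1 : lam ≠ 1)
    (h3 : lam + 3 ≠ 0) :
    (((univ : Finset (F × F × F)).filter fun p : F × F × F =>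
        p.1 ^ 4 + p.2.1 ^ 4 + p.2.2 ^ 4 = (lam + 1) * (p.1 ^ 2 * p.2.1 ^ 2
          + p.2.1 ^ 2 * p.2.2 ^ 2 + p.2.2 ^ 2 * p.1 ^ 2)).card : ℤ)
      = (Fintype.card F : ℤ) ^ 2 + 3 * (((Fintype.card F : ℤ) - 1)
          * ((quadraticChar F (lam + 3) : ℤ)
            * ∑ x : F, (quadraticChar F (x * (x - 1) * (x - lam)) : ℤ))) := by
  -- card as triple sum of indicators
  rw [Finset.card_filter]
  rw [Fintype.sum_prod_type]
  have step0 : ∀ x : F, ∀ q : F × F,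
      (if x ^ 4 + q.1 ^ 4 + q.2 ^ 4 = (lam + 1) * (x ^ 2 * q.1 ^ 2
          + q.1 ^ 2 * q.2 ^ 2 + q.2 ^ 2 * x ^ 2) then (1 : ℤ) else 0)
      = (if Qp lam (x ^ 2) (q.1 ^ 2) (q.2 ^ 2) = 0 then (1 : ℤ) else 0) := by
    intro x q
    congr 1
    rw [eq_iff_iff]
    rw [show Qp lam (x ^ 2) (q.1 ^ 2) (q.2 ^ 2)
      = (x ^ 4 + q.1 ^ 4 + q.2 ^ 4) - (lam + 1) * (x ^ 2 * q.1 ^ 2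
          + q.1 ^ 2 * q.2 ^ 2 + q.2 ^ 2 * x ^ 2) from by unfold Qp; ring]
    rw [sub_eq_zero]
  have recast : ∑ x : F, ∑ q : F × F,
      (if x ^ 4 + q.1 ^ 4 + q.2 ^ 4 = (lam + 1) * (x ^ 2 * q.1 ^ 2
          + q.1 ^ 2 * q.2 ^ 2 + q.2 ^ 2 * x ^ 2) then (1 : ℤ) else 0)
      = ∑ x : F, ∑ y : F, ∑ z : F,
        (if Qp lam (x ^ 2) (y ^ 2) (z ^ 2) = 0 then (1 : ℤ) else 0) := by
    refine Finset.sum_congr rfl fun x _ => ?_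
    rw [Finset.sum_congr rfl fun q _ => step0 x q, Fintype.sum_prod_type]
  push_cast
  rw [recast]
  -- unfold the squares using sum_sq_expand, innermost first
  rw [Finset.sum_congr rfl fun x _ => Finset.sum_congr rfl fun y _ =>
    sum_sq_expand hF (fun w => (if Qp lam (x ^ 2) (y ^ 2) w = 0 then (1 : ℤ) else 0))]
  rw [Finset.sum_congr rfl fun x _ =>
    sum_sq_expand hF (fun v => ∑ w : F,
      ((quadraticChar F w : ℤ) + 1) * (if Qp lam (x ^ 2) v w = 0 then (1 : ℤ) else 0))]
  rw [sum_sq_expand hF (fun u => ∑ v : F, ((quadraticChar F v : ℤ) + 1)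
    * ∑ w : F, ((quadraticChar F w : ℤ) + 1)
      * (if Qp lam u v w = 0 then (1 : ℤ) else 0))]
  -- push the factors inside to get a triple sum of products
  have push1 : ∀ u : F, ((quadraticChar F u : ℤ) + 1)
        * ∑ v : F, ((quadraticChar F v : ℤ) + 1) * ∑ w : F, ((quadraticChar F w : ℤ) + 1)
          * (if Qp lam u v w = 0 then (1 : ℤ) else 0)
      = ∑ v : F, ∑ w : F, ((quadraticChar F u : ℤ) + 1) * (((quadraticChar F v : ℤ) + 1)
          * (((quadraticChar F w : ℤ) + 1) * (if Qp lam u v w = 0 then (1 : ℤ) else 0))) := by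
    intro u
    rw [Finset.mul_sum]
    refine Finset.sum_congr rfl fun v _ => ?_
    rw [Finset.mul_sum, Finset.mul_sum]
  rw [Finset.sum_congr rfl fun u _ => push1 u]
  -- expand the product of three factors into eight indicator terms
  have expand : ∀ u v w : F, ((quadraticChar F u : ℤ) + 1) * (((quadraticChar F v : ℤ) + 1)
        * (((quadraticChar F w : ℤ) + 1) * (if Qp lam u v w = 0 then (1 : ℤ) else 0)))
      = (if Qp lam u v w = 0 then (1 : ℤ) else 0)
        + ((if Qp lam u v w = 0 then (quadraticChar F (u * v) : ℤ) else 0)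
          + (if Qp lam u v w = 0 then (quadraticChar F (v * w) : ℤ) else 0)
          + (if Qp lam u v w = 0 then (quadraticChar F (w * u) : ℤ) else 0))
        + ((if Qp lam u v w = 0 then (quadraticChar F u : ℤ) else 0)
          + (if Qp lam u v w = 0 then (quadraticChar F v : ℤ) else 0)
          + (if Qp lam u v w = 0 then (quadraticChar F w : ℤ) else 0)
          + (if Qp lam u v w = 0 then (quadraticChar F (u * v * w) : ℤ) else 0)) := by
    intro u v w
    by_cases h : Qp lam u v w = 0
    · simp only [if_pos h, mul_one]
      rw [map_mul (quadraticChar F) (u * v) w, map_mul (quadraticChar F) u v,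
        map_mul (quadraticChar F) v w, map_mul (quadraticChar F) w u]
      push_cast
      ring
    · simp only [if_neg h, mul_zero]
      norm_num
  rw [Finset.sum_congr rfl fun u _ => Finset.sum_congr rfl fun v _ =>
    Finset.sum_congr rfl fun w _ => expand u v w]
  simp only [Finset.sum_add_distrib]
  -- kill the four odd sums
  obtain ⟨c, hc⟩ := quadraticChar_exists_neg_one hF
  have hc0 : c ≠ 0 := by
    intro h
    rw [h] at hc
    simp at hc
  have hcz : (quadraticChar F c : ℤ) = -1 := by exact_mod_cast hc
  have van1 := vanish_odd hF hc0 hcz lam (fun u _ _ => u) (by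
    intro u v w
    rw [map_mul]
    push_cast
    rw [hcz]; ring)
  have van2 := vanish_odd hF hc0 hcz lam (fun _ v _ => v) (by
    intro u v w
    rw [map_mul]
    push_cast
    rw [hcz]; ring)
  have van3 := vanish_odd hF hc0 hcz lam (fun _ _ w => w) (by
    intro u v w
    rw [map_mul]
    push_cast
    rw [hcz]; ring)
  have van4 := vanish_odd hF hc0 hcz lam (fun u v w => u * v * w) (by
    intro u v w
    rw [show (c * u) * (c * v) * (c * w) = c ^ 2 * (c * (u * v * w)) from by ring,
      chi_sq_mul hF hc0, map_mul]
    push_cast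
    rw [hcz]; ring)
  rw [van1, van2, van3, van4, sum_A hF lam h0 h1 h3, sum_vw_eq lam, sum_wu_eq lam,
    sum_B hF lam h1 h3]
  ring

end

section
variable {F : Type*} [Field F] [Fintype F] [DecidableEq F]

lemma legendre_count (hF : ringChar F ≠ 2) (lam : F) (h3 : lam + 3 ≠ 0) :
    (((univ : Finset (F × F)).filter fun p : F × F =>
        (lam + 3) * p.2 ^ 2 = p.1 * (p.1 - 1) * (p.1 - lam)).card : ℤ)
      = (Fintype.card F : ℤ) + (quadraticChar F (lam + 3) : ℤ)
          * ∑ x : F, (quadraticChar F (x * (x - 1) * (x - lam)) : ℤ) := by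
  rw [Finset.card_filter]
  push_cast
  rw [Fintype.sum_prod_type]
  have hinner : ∀ x : F, ∑ y : F,
      (if (lam + 3) * y ^ 2 = x * (x - 1) * (x - lam) then (1 : ℤ) else 0)
      = 1 + (quadraticChar F ((lam + 3) * (x * (x - 1) * (x - lam))) : ℤ) := by
    intro x
    rw [← Finset.sum_filter, Finset.sum_const, nsmul_eq_mul, mul_one]
    have hset : ((univ : Finset F).filter fun y : F =>
          (lam + 3) * y ^ 2 = x * (x - 1) * (x - lam))
        = (univ : Finset F).filter fun y : F =>
          y ^ 2 = (lam + 3)⁻¹ * (x * (x - 1) * (x - lam)) := by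
      refine Finset.filter_congr fun y _ => ?_
      constructor
      · intro h
        rw [← h]
        field_simp
      · intro h
        rw [h]
        field_simp
    rw [hset, card_sq_eq hF]
    rw [show (lam + 3)⁻¹ * (x * (x - 1) * (x - lam))
      = ((lam + 3)⁻¹) ^ 2 * ((lam + 3) * (x * (x - 1) * (x - lam))) from by
        field_simp]
    rw [chi_sq_mul hF (inv_ne_zero h3)]
    ring
  rw [Finset.sum_congr rfl fun x _ => hinner x, Finset.sum_add_distrib, Finset.sum_const,
    Finset.card_univ, nsmul_eq_mul, mul_one]
  have : ∀ x : F, (quadraticChar F ((lam + 3) * (x * (x - 1) * (x - lam))) : ℤ)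
      = (quadraticChar F (lam + 3) : ℤ) * quadraticChar F (x * (x - 1) * (x - lam)) := by
    intro x
    exact_mod_cast map_mul (quadraticChar F) (lam + 3) (x * (x - 1) * (x - lam))
  rw [Finset.sum_congr rfl fun x _ => this x, ← Finset.mul_sum]

end

section
open LinearAlgebra.Projectivization

variable {F : Type*} [Field F] [Fintype F] [DecidableEq F]

/-- The quartic condition on a vector. -/
def phi (lam : F) (v : Fin 3 → F) : Prop :=
  v 0 ^ 4 + v 1 ^ 4 + v 2 ^ 4
    = (lam + 1) * (v 0 ^ 2 * v 1 ^ 2 + v 1 ^ 2 * v 2 ^ 2 + v 2 ^ 2 * v 0 ^ 2)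

lemma phi_unit_smul (lam : F) (c : Fˣ) (v : Fin 3 → F) : phi lam (c • v) ↔ phi lam v := by
  have happ : ∀ i : Fin 3, (c • v) i = (c : F) * v i := by
    intro i
    simp [Units.smul_def]
  have hc4 : ((c : F)) ^ 4 ≠ 0 := pow_ne_zero _ c.ne_zero
  unfold phi
  rw [happ 0, happ 1, happ 2]
  rw [show ((c : F) * v 0) ^ 4 + ((c : F) * v 1) ^ 4 + ((c : F) * v 2) ^ 4
    = (c : F) ^ 4 * (v 0 ^ 4 + v 1 ^ 4 + v 2 ^ 4) from by ring]
  rw [show (lam + 1) * (((c : F) * v 0) ^ 2 * ((c : F) * v 1) ^ 2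
        + ((c : F) * v 1) ^ 2 * ((c : F) * v 2) ^ 2
        + ((c : F) * v 2) ^ 2 * ((c : F) * v 0) ^ 2)
    = (c : F) ^ 4 * ((lam + 1) * (v 0 ^ 2 * v 1 ^ 2 + v 1 ^ 2 * v 2 ^ 2
        + v 2 ^ 2 * v 0 ^ 2)) from by ring]
  exact mul_right_inj' hc4

lemma unit_smul_ne_zero (c : Fˣ) (v : Fin 3 → F) (hv : v ≠ 0) : c • v ≠ 0 := by
  intro h
  apply hv
  have := congrArg (fun w : Fin 3 → F => c⁻¹ • w) h
  simpa [smul_smul] using this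

noncomputable def projEquiv (lam : F) :
    {v : Fin 3 → F // v ≠ 0 ∧ phi lam v}
      ≃ {P : ℙ F (Fin 3 → F) // phi lam P.rep} × Fˣ where
  toFun x :=
    let hv := x.2.1
    let a := Classical.choose (Projectivization.exists_smul_eq_mk_rep F x.1 hv)
    have ha : a • x.1 = (Projectivization.mk F x.1 hv).rep :=
      Classical.choose_spec (Projectivization.exists_smul_eq_mk_rep F x.1 hv)
    ⟨⟨Projectivization.mk F x.1 hv, by
        rw [← ha]
        exact (phi_unit_smul lam a x.1).mpr x.2.2⟩, a⁻¹⟩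
  invFun y := ⟨(y.2 : Fˣ) • y.1.1.rep,
    unit_smul_ne_zero y.2 _ y.1.1.rep_nonzero,
    (phi_unit_smul lam y.2 _).mpr y.1.2⟩
  left_inv := by
    rintro ⟨v, hv, hphi⟩
    apply Subtype.ext
    simp only
    set a := Classical.choose (Projectivization.exists_smul_eq_mk_rep F v hv) with ha_def
    have ha : a • v = (Projectivization.mk F v hv).rep :=
      Classical.choose_spec (Projectivization.exists_smul_eq_mk_rep F v hv)
    rw [← ha, smul_smul, inv_mul_cancel, one_smul]
  right_inv := by
    rintro ⟨⟨P, hP⟩, c⟩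
    have hv : (c : Fˣ) • P.rep ≠ 0 := unit_smul_ne_zero c _ P.rep_nonzero
    have hmk : Projectivization.mk F ((c : Fˣ) • P.rep) hv = P := by
      conv_rhs => rw [← Projectivization.mk_rep P]
      rw [Projectivization.mk_eq_mk_iff]
      exact ⟨c, rfl⟩
    have ha : Classical.choose (Projectivization.exists_smul_eq_mk_rep F _ hv) • (c • P.rep)
        = (Projectivization.mk F ((c : Fˣ) • P.rep) hv).rep :=
      Classical.choose_spec (Projectivization.exists_smul_eq_mk_rep F _ hv)
    set a := Classical.choose (Projectivization.exists_smul_eq_mk_rep F _ hv) with ha_def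
    have hrep : (Projectivization.mk F ((c : Fˣ) • P.rep) hv).rep = P.rep := by rw [hmk]
    have hac : (a * c) • P.rep = P.rep := by
      rw [mul_smul, ha, hrep]
    have hac1 : a * c = 1 := by
      rw [Units.smul_def] at hac
      have hsub : (((a * c : Fˣ) : F) - 1) • P.rep = 0 := by
        rw [sub_smul, one_smul, sub_eq_zero]
        exact hac
      rcases smul_eq_zero.mp hsub with h' | h'
      · have hval : ((a * c : Fˣ) : F) = 1 := by
          have := sub_eq_zero.mp h'
          simpa using this
        exact Units.ext (by simpa using hval)
      · exact absurd h' P.rep_nonzero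
    have hainv : a⁻¹ = c := by
      rw [← mul_one a⁻¹, ← hac1, ← mul_assoc, inv_mul_cancel, one_mul]
    apply Prod.ext
    · apply Subtype.ext
      simp only
      exact hmk
    · simp only
      exact hainv

end

section
open LinearAlgebra.Projectivization

variable {F : Type*} [Field F] [Fintype F] [DecidableEq F]

lemma card_subtype_eq (lam : F) :
    Nat.card {v : Fin 3 → F // v ≠ 0 ∧ phi lam v}
      = Nat.card {P : ℙ F (Fin 3 → F) // phi lam P.rep} * (Fintype.card F - 1) := by
  rw [Nat.card_congr (projEquiv lam), Nat.card_prod]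
  congr 1
  rw [Nat.card_eq_fintype_card, Fintype.card_units]

def tripleEquiv : (Fin 3 → F) ≃ F × F × F where
  toFun v := (v 0, v 1, v 2)
  invFun p := ![p.1, p.2.1, p.2.2]
  left_inv v := by
    funext i
    fin_cases i <;> simp
  right_inv p := rfl

lemma card_affine (lam : F) :
    ((univ : Finset (F × F × F)).filter fun p : F × F × F =>
        p.1 ^ 4 + p.2.1 ^ 4 + p.2.2 ^ 4 = (lam + 1) * (p.1 ^ 2 * p.2.1 ^ 2
          + p.2.1 ^ 2 * p.2.2 ^ 2 + p.2.2 ^ 2 * p.1 ^ 2)).card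
      = Nat.card {v : Fin 3 → F // v ≠ 0 ∧ phi lam v} + 1 := by
  have he : {v : Fin 3 → F // v ≠ 0 ∧ phi lam v}
      ≃ {p : F × F × F // p ≠ 0 ∧ p.1 ^ 4 + p.2.1 ^ 4 + p.2.2 ^ 4
          = (lam + 1) * (p.1 ^ 2 * p.2.1 ^ 2 + p.2.1 ^ 2 * p.2.2 ^ 2
            + p.2.2 ^ 2 * p.1 ^ 2)} := by
    refine (tripleEquiv).subtypeEquiv fun v => ?_
    have hzero : v = 0 ↔ tripleEquiv v = (0 : F × F × F) := by
      constructor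
      · intro h
        rw [h]
        rfl
      · intro h
        have h' : v 0 = 0 ∧ v 1 = 0 ∧ v 2 = 0 := by
          have h0 := congrArg Prod.fst h
          have h1 := congrArg (fun p : F × F × F => p.2.1) h
          have h2 := congrArg (fun p : F × F × F => p.2.2) h
          exact ⟨h0, h1, h2⟩
        funext i
        fin_cases i <;> simp [h'.1, h'.2.1, h'.2.2]
    constructor
    · rintro ⟨hv, hphi⟩
      exact ⟨fun h => hv (hzero.mpr h), hphi⟩
    · rintro ⟨hv, hphi⟩
      exact ⟨fun h => hv (hzero.mp h), hphi⟩
  rw [Nat.card_congr he, Nat.card_eq_fintype_card, Fintype.card_subtype]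
  have hset : ((univ : Finset (F × F × F)).filter fun p : F × F × F =>
        p ≠ 0 ∧ p.1 ^ 4 + p.2.1 ^ 4 + p.2.2 ^ 4 = (lam + 1) * (p.1 ^ 2 * p.2.1 ^ 2
          + p.2.1 ^ 2 * p.2.2 ^ 2 + p.2.2 ^ 2 * p.1 ^ 2))
      = ((univ : Finset (F × F × F)).filter fun p : F × F × F =>
        p.1 ^ 4 + p.2.1 ^ 4 + p.2.2 ^ 4 = (lam + 1) * (p.1 ^ 2 * p.2.1 ^ 2
          + p.2.1 ^ 2 * p.2.2 ^ 2 + p.2.2 ^ 2 * p.1 ^ 2)).erase 0 := by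
    ext p
    simp only [Finset.mem_filter, Finset.mem_univ, true_and, Finset.mem_erase]
  rw [hset]
  rw [Finset.card_erase_of_mem]
  · have hmem : (0 : F × F × F) ∈ (univ : Finset (F × F × F)).filter fun p : F × F × F =>
        p.1 ^ 4 + p.2.1 ^ 4 + p.2.2 ^ 4 = (lam + 1) * (p.1 ^ 2 * p.2.1 ^ 2
          + p.2.1 ^ 2 * p.2.2 ^ 2 + p.2.2 ^ 2 * p.1 ^ 2) := by
      simp only [Finset.mem_filter, Finset.mem_univ, true_and]
      norm_num
    have hpos : 1 ≤ ((univ : Finset (F × F × F)).filter fun p : F × F × F =>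
        p.1 ^ 4 + p.2.1 ^ 4 + p.2.2 ^ 4 = (lam + 1) * (p.1 ^ 2 * p.2.1 ^ 2
          + p.2.1 ^ 2 * p.2.2 ^ 2 + p.2.2 ^ 2 * p.1 ^ 2)).card :=
      Finset.card_pos.mpr ⟨0, hmem⟩
    omega
  · simp only [Finset.mem_filter, Finset.mem_univ, true_and]
    norm_num

end

/-- For odd `q` and `λ ∈ F_q`, `λ ∉ {0, 1, -3}`, the number of points of the plane quartic
`C_λ : x⁴ + y⁴ + z⁴ = (λ+1)(x²y² + y²z² + z²x²)` in `ℙ²(F_q)` equals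
`3·#E_λ^{(λ+3)}(F_q) − 2q − 2`, where `#E_λ^{(λ+3)}(F_q)` is `1` plus the number of affine
solutions of `(λ+3)y² = x(x−1)(x−λ)`. -/
theorem quartic_count_eq {F : Type*} [Field F] [Fintype F] (hodd : Odd (Fintype.card F))
    (lam : F) (h0 : lam ≠ 0) (h1 : lam ≠ 1) (h3 : lam ≠ -3) :
    (Nat.card {P : Projectivization F (Fin 3 → F) //
        P.rep 0 ^ 4 + P.rep 1 ^ 4 + P.rep 2 ^ 4 =
          (lam + 1) * (P.rep 0 ^ 2 * P.rep 1 ^ 2 + P.rep 1 ^ 2 * P.rep 2 ^ 2 +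
            P.rep 2 ^ 2 * P.rep 0 ^ 2)} : ℤ) =
      3 * ((1 + Nat.card {p : F × F //
            (lam + 3) * p.2 ^ 2 = p.1 * (p.1 - 1) * (p.1 - lam)} : ℕ) : ℤ) -
        2 * (Fintype.card F : ℤ) - 2 := by
  letI : DecidableEq F := Classical.decEq F
  have hF : ringChar F ≠ 2 := by
    intro h
    have heven := FiniteField.even_card_of_char_two h
    rcases hodd with ⟨k, hk⟩
    omega
  have h3' : lam + 3 ≠ 0 := by
    intro h
    apply h3
    linear_combination h
  set q : ℤ := (Fintype.card F : ℤ) with hq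
  have hq2 : (2 : ℕ) ≤ Fintype.card F := Fintype.one_lt_card
  have hq1 : q - 1 ≠ 0 := by
    have : (2 : ℤ) ≤ q := by rw [hq]; exact_mod_cast hq2
    omega
  set T : ℤ := ∑ x : F, (quadraticChar F (x * (x - 1) * (x - lam)) : ℤ) with hT
  set NP : ℕ := Nat.card {P : Projectivization F (Fin 3 → F) // phi lam P.rep} with hNP
  -- identify the statement's subtype with `phi`
  have hident : Nat.card {P : Projectivization F (Fin 3 → F) //
        P.rep 0 ^ 4 + P.rep 1 ^ 4 + P.rep 2 ^ 4 =
          (lam + 1) * (P.rep 0 ^ 2 * P.rep 1 ^ 2 + P.rep 1 ^ 2 * P.rep 2 ^ 2 +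
            P.rep 2 ^ 2 * P.rep 0 ^ 2)} = NP := rfl
  rw [hident]
  -- the main counting identity, multiplied by (q-1)
  have hmain : (NP : ℤ) * (q - 1)
      = q ^ 2 + 3 * ((q - 1) * ((quadraticChar F (lam + 3) : ℤ) * T)) - 1 := by
    have hc1 := card_subtype_eq (F := F) lam
    have hc2 := card_affine (F := F) lam
    have hc3 := quartic_affine hF lam h0 h1 h3'
    rw [hc2, hc1] at hc3
    have hcast : ((NP * (Fintype.card F - 1) + 1 : ℕ) : ℤ)
        = (NP : ℤ) * (q - 1) + 1 := by
      push_cast [Nat.cast_sub (le_of_lt hq2)]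
      ring
    rw [hcast] at hc3
    rw [← hT] at hc3
    linarith
  -- the Legendre count
  have hleg : ((Nat.card {p : F × F //
        (lam + 3) * p.2 ^ 2 = p.1 * (p.1 - 1) * (p.1 - lam)} : ℕ) : ℤ)
      = q + (quadraticChar F (lam + 3) : ℤ) * T := by
    have := legendre_count hF lam h3'
    rw [← hT] at this
    rw [Nat.card_eq_fintype_card, Fintype.card_subtype]
    exact this
  -- conclude by cancelling (q-1)
  apply mul_right_cancel₀ hq1
  rw [hmain]
  have hrhs : (3 * ((1 + Nat.card {p : F × F //
        (lam + 3) * p.2 ^ 2 = p.1 * (p.1 - 1) * (p.1 - lam)} : ℕ) : ℤ)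
      - 2 * (Fintype.card F : ℤ) - 2)
      = q + 1 + 3 * ((quadraticChar F (lam + 3) : ℤ) * T) := by
    push_cast
    rw [hleg]
    ring
  rw [hrhs]
  ring
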